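/- arXiv:1502.07906 — 2 statements merged into one kernel-verified Lean document; each statement's English description precedes it below -/
import Mathlib

section
/- With the notation above, the union ⋃_{n≥0} g_n(𝔹^q) equals the set {x ∈ X : Φ_{0,n}(x) ∈ h(𝔹^q) for all sufficiently large n}. -/
/-- `comps φ n m = φ (m-1) ∘ ⋯ ∘ φ n` (identity when `m ≤ n`). -/
def comps {α : Type*} (φ : ℕ → α → α) (n m : ℕ) (x : α) : α :=
  (List.range' n (m - n)).foldl (fun y k => φ k y) x

/-- `compEquiv Φ n = Φ (n-1) ∘ ⋯ ∘ Φ 0` as a bijection. -/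
def compEquiv {X : Type*} (Φ : ℕ → X ≃ X) : ℕ → X ≃ X
  | 0 => Equiv.refl X
  | n + 1 => (compEquiv Φ n).trans (Φ n)

/-- With `g_n = Φ_{0,n}⁻¹ ∘ h`, the union `⋃ n, g_n(𝔹^q)` equals the set of points `x`
with `Φ_{0,n}(x) ∈ h(𝔹^q)` for all sufficiently large `n`. -/
theorem stmt5 (q : ℕ) {X : Type*}
    (φ : ℕ → ↥(Metric.ball (0 : EuclideanSpace ℂ (Fin q)) 1) →
      ↥(Metric.ball (0 : EuclideanSpace ℂ (Fin q)) 1))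
    (Φ : ℕ → X ≃ X)
    (h : ↥(Metric.ball (0 : EuclideanSpace ℂ (Fin q)) 1) → X)
    (hinj : Function.Injective h)
    (hcomm : ∀ n, h ∘ φ n = (Φ n) ∘ h) :
    (⋃ n, Set.range (fun z => (compEquiv Φ n).symm (h z))) =
      {x : X | ∀ᶠ n in Filter.atTop, compEquiv Φ n x ∈ Set.range h} := by
  ext x
  simp only [Set.mem_iUnion, Set.mem_range, Set.mem_setOf_eq, Filter.eventually_atTop]
  constructor
  · rintro ⟨n, z, hz⟩
    refine ⟨n, ?_⟩
    intro m hm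
    induction m, hm using Nat.le_induction with
    | base =>
      exact ⟨z, by rw [← hz, Equiv.apply_symm_apply]⟩
    | succ m hm ih =>
      obtain ⟨w, hw⟩ := ih
      refine ⟨φ m w, ?_⟩
      have := congrFun (hcomm m) w
      simp only [Function.comp_apply] at this
      rw [this, hw]
      rfl
  · rintro ⟨n, hev⟩
    obtain ⟨z, hz⟩ := hev n le_rfl
    exact ⟨n, z, by rw [hz, Equiv.symm_apply_apply]⟩
end

section
/- If f : Δ → Δ is holomorphic, f(0) = 0, and σ : Δ → ℂ satisfies the Schröder equation σ ∘ f = f'(0)·σ with σ(0) = 0 and σ'(0) = 1, and 0 < |f'(0)| < 1, then σ is unique: any other holomorphic τ : Δ → ℂ with τ ∘ f = f'(0)·τ, τ(0) = 0, τ'(0) = 1 equals σ. -/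
open Metric Filter Topology


/-- Uniqueness of the normalized solution of the Schröder equation: if `f : Δ → Δ` is
holomorphic with `f(0) = 0`, `0 < |f'(0)| < 1`, and `σ, τ` are holomorphic solutions of
`σ ∘ f = f'(0)·σ` on `Δ` with `σ(0) = 0`, `σ'(0) = 1` (and likewise for `τ`), then
`σ = τ` on `Δ`. -/
theorem stmt18 (f : ℂ → ℂ)
    (hhol : DifferentiableOn ℂ f (Metric.ball 0 1))
    (hmap : Set.MapsTo f (Metric.ball 0 1) (Metric.ball 0 1))
    (hfix : f 0 = 0)
    (hd0 : 0 < ‖deriv f 0‖) (hd1 : ‖deriv f 0‖ < 1)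
    (σ τ : ℂ → ℂ)
    (hσhol : DifferentiableOn ℂ σ (Metric.ball 0 1))
    (hτhol : DifferentiableOn ℂ τ (Metric.ball 0 1))
    (hσeq : ∀ z ∈ Metric.ball (0 : ℂ) 1, σ (f z) = deriv f 0 * σ z)
    (hτeq : ∀ z ∈ Metric.ball (0 : ℂ) 1, τ (f z) = deriv f 0 * τ z)
    (hσ0 : σ 0 = 0) (hσ1 : deriv σ 0 = 1)
    (hτ0 : τ 0 = 0) (hτ1 : deriv τ 0 = 1) :
    Set.EqOn σ τ (Metric.ball 0 1) := by
  set lam := deriv f 0 with hlam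
  have h0mem : (0 : ℂ) ∈ Metric.ball (0 : ℂ) 1 := by simp
  have hball : IsOpen (Metric.ball (0 : ℂ) 1) := Metric.isOpen_ball
  have hσa : AnalyticOnNhd ℂ σ (Metric.ball 0 1) := hσhol.analyticOnNhd hball
  have hτa : AnalyticOnNhd ℂ τ (Metric.ball 0 1) := hτhol.analyticOnNhd hball
  have hfa : AnalyticOnNhd ℂ f (Metric.ball 0 1) := hhol.analyticOnNhd hball
  set g : ℂ → ℂ := fun z => σ z - τ z with hg
  have hga : AnalyticAt ℂ g 0 := (hσa 0 h0mem).sub (hτa 0 h0mem)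
  have hg0 : g 0 = 0 := by simp [hg, hσ0, hτ0]
  have hgd : deriv g 0 = 0 := by
    have : deriv g 0 = deriv σ 0 - deriv τ 0 :=
      deriv_sub ((hσa 0 h0mem).differentiableAt) ((hτa 0 h0mem).differentiableAt)
    rw [this, hσ1, hτ1, sub_self]
  -- Schröder equation for g eventually near 0
  have hmemev : ∀ᶠ z in 𝓝 (0:ℂ), z ∈ Metric.ball (0:ℂ) 1 := hball.eventually_mem h0mem
  have hgeq : ∀ᶠ z in 𝓝 (0:ℂ), g (f z) = lam * g z := by
    filter_upwards [hmemev] with z hz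
    simp [hg, hσeq z hz, hτeq z hz, mul_sub]
  -- f tends to 0 at 0
  have hfc : ContinuousAt f 0 := (hfa 0 h0mem).continuousAt
  have hf0 : Filter.Tendsto f (𝓝 0) (𝓝 0) := by
    simpa [hfix] using hfc.tendsto
  -- main: g is eventually zero near 0
  have hkey : ∀ᶠ z in 𝓝 (0:ℂ), g z = 0 := by
    rcases eq_or_ne (analyticOrderAt g 0) ⊤ with htop | hne
    · exact analyticOrderAt_eq_top.mp htop
    · exfalso
      lift analyticOrderAt g 0 to ℕ using hne with n hn
      obtain ⟨h, hha, hh0, hhev⟩ := (hga.analyticOrderAt_eq_natCast (n := n)).mp hn.symm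
      simp only [sub_zero] at hhev
      -- n ≠ 0
      have hn0 : n ≠ 0 := by
        intro h0
        subst h0
        have := hhev.self_of_nhds
        simp [hg0] at this
        exact hh0 this.symm
      -- n ≠ 1
      have hn1 : n ≠ 1 := by
        intro h1
        subst h1
        have hd : deriv g 0 = deriv (fun z => (z:ℂ) ^ 1 • h z) 0 := by
          apply Filter.EventuallyEq.deriv_eq
          exact hhev
        have : deriv (fun z => (z:ℂ) ^ 1 • h z) 0 = h 0 := by
          have h1 : HasDerivAt (fun z => (z:ℂ)) 1 0 := hasDerivAt_id 0
          have h2 : HasDerivAt h (deriv h 0) 0 := hha.differentiableAt.hasDerivAt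
          have := (h1.mul h2)
          simp only [pow_one, smul_eq_mul]
          refine (HasDerivAt.deriv this).trans ?_
          simp
        rw [hd, this] at hgd
        exact hh0 hgd
      have hn2 : 2 ≤ n := by omega
      -- the eventual equation divided by z^n, for z ≠ 0
      have hev2 : ∀ᶠ z in 𝓝[≠] (0:ℂ), (f z / z) ^ n * h (f z) = lam * h z := by
        have hfev : ∀ᶠ z in 𝓝 (0:ℂ), g (f z) = (f z) ^ n • h (f z) := hf0.eventually hhev
        have : ∀ᶠ z in 𝓝 (0:ℂ), (f z) ^ n * h (f z) = lam * (z ^ n * h z) := by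
          filter_upwards [hgeq, hhev, hfev] with z h1 h2 h3
          simp only [smul_eq_mul] at h2 h3
          rw [← h3, h1, h2]
        filter_upwards [self_mem_nhdsWithin, this.filter_mono nhdsWithin_le_nhds] with z hz h1
        have hz' : (z : ℂ) ≠ 0 := hz
        rw [div_pow, div_mul_eq_mul_div, div_eq_iff (pow_ne_zero n hz')]
        linear_combination h1 * 1
      -- limits
      have hslope : Filter.Tendsto (fun z => f z / z) (𝓝[≠] (0:ℂ)) (𝓝 lam) := by
        have hder : HasDerivAt f lam 0 :=
          ((hfa 0 h0mem).differentiableAt).hasDerivAt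
        have := hasDerivAt_iff_tendsto_slope.mp hder
        apply this.congr
        intro z
        simp [slope_def_field, hfix, div_eq_inv_mul]
      have hhc : ContinuousAt h 0 := hha.continuousAt
      have hfne : Filter.Tendsto f (𝓝[≠] (0:ℂ)) (𝓝 0) := hf0.mono_left nhdsWithin_le_nhds
      have hLHS : Filter.Tendsto (fun z => (f z / z) ^ n * h (f z)) (𝓝[≠] (0:ℂ))
          (𝓝 (lam ^ n * h 0)) := by
        exact ((hslope.pow n).mul ((hhc.tendsto).comp hfne))
      have hRHS : Filter.Tendsto (fun z => lam * h z) (𝓝[≠] (0:ℂ)) (𝓝 (lam * h 0)) := by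
        exact (tendsto_const_nhds.mul ((hhc.tendsto).mono_left nhdsWithin_le_nhds))
      have heq : lam ^ n * h 0 = lam * h 0 :=
        tendsto_nhds_unique (hLHS.congr' hev2) hRHS
      have hlamne : lam ≠ 0 := by
        intro h0; rw [h0] at hd0; simp at hd0
      have : lam ^ (n - 1) = 1 := by
        have h1 : lam ^ n = lam := mul_right_cancel₀ hh0 heq
        have : lam ^ (n-1) * lam = 1 * lam := by
          rw [one_mul, ← pow_succ]
          have : n - 1 + 1 = n := by omega
          rw [this, h1]
        exact mul_right_cancel₀ hlamne this
      have habs : ‖lam‖ ^ (n - 1) = 1 := by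
        rw [← norm_pow, this, norm_one]
      have : ‖lam‖ ^ (n-1) < 1 := by
        apply pow_lt_one₀ (norm_nonneg _) hd1 (by omega)
      rw [habs] at this
      exact lt_irrefl _ this
  -- identity theorem
  have hev : σ =ᶠ[𝓝 (0:ℂ)] τ := by
    filter_upwards [hkey] with z hz
    exact sub_eq_zero.mp hz
  exact hσa.eqOn_of_preconnected_of_eventuallyEq hτa
    (convex_ball (0:ℂ) 1).isPreconnected h0mem hev
end
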